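/- Let α be irrational, f : ℝ/ℤ → ℝ absolutely continuous with ∫ f = 1, and set f_0 = f − 1. Suppose (q_{n_k}) is a subsequence of the denominators of α with ∑_k ‖f_0^{(q_{n_k})}‖_∞ < ∞ and ∑_k ‖q_{n_k}α‖ < ∞, and let β = ∑_k q_{n_k}α mod 1. Then the function g(x) = ∑_{k≥1} f_0^{(q_{n_k})}(x + β_k), where β_k = ∑_{j<k} q_{n_j}α, converges uniformly and satisfies f(x+β) − f(x) = g(x+α) − g(x) for all x. -/

import Mathlib

open MeasureTheory Filter

/-- The distance from a real number to the nearest integer. -/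
noncomputable def distInt (x : ℝ) : ℝ := ⨅ m : ℤ, |x - m|

lemma distInt_eq (x : ℝ) : distInt x = |x - round x| := by
  apply le_antisymm
  · exact ciInf_le ⟨0, by rintro y ⟨m, rfl⟩; positivity⟩ (round x)
  · apply le_ciInf
    intro m
    by_cases h : m = round x
    · simp [h]
    · have h1 : (1 : ℝ) ≤ |(round x : ℝ) - m| := by
        have h0 : (1 : ℤ) ≤ |round x - m| := Int.one_le_abs (sub_ne_zero.mpr (Ne.symm h))
        calc (1:ℝ) = ((1:ℤ):ℝ) := by norm_num
        _ ≤ |((round x - m : ℤ) : ℝ)| := by exact_mod_cast h0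
        _ = |(round x : ℝ) - m| := by push_cast; ring_nf
      have h2 : |x - round x| ≤ 1 / 2 := abs_sub_round x
      have h3 : |(round x : ℝ) - m| ≤ |(round x : ℝ) - x| + |x - m| := abs_sub_le _ _ _
      have h4 : |(round x : ℝ) - x| = |x - round x| := abs_sub_comm _ _
      linarith

/-- Construction of solutions of the cohomological equation for translates:
if `f` is 1-periodic, absolutely continuous with `∫₀¹ f = 1`, `f₀ = f - 1`, and
`(q_{n_k})` is a subsequence of the denominators of the irrational `α` with
`∑_k ‖f₀^{(q_{n_k})}‖_∞ < ∞` and `∑_k ‖q_{n_k} α‖ < ∞`, then with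
`β = ∑_k q_{n_k} α (mod 1)` and `β_k = ∑_{j<k} q_{n_j} α (mod 1)`, the series
`g(x) = ∑_k f₀^{(q_{n_k})}(x + β_k)` converges uniformly and satisfies
`f(x+β) - f(x) = g(x+α) - g(x)` for all `x`. -/
theorem exists_transfer_function_of_AC (α : ℝ) (hα : Irrational α)
    (f : ℝ → ℝ) (hper : ∀ x, f (x + 1) = f x)
    (hAC : ∃ f' : ℝ → ℝ, (∀ a b : ℝ, IntervalIntegrable f' volume a b) ∧
      ∀ x, f x = f 0 + ∫ t in (0 : ℝ)..x, f' t)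
    (hint : (∫ x in (0 : ℝ)..1, f x) = 1)
    (qs : ℕ → ℕ) (hqs : StrictMono qs)
    (hden : ∀ k, ∃ n, (qs k : ℝ) = (GenContFract.of α).dens n)
    (C : ℕ → ℝ) (hCsum : Summable C)
    (hCbound : ∀ (k : ℕ) (x : ℝ),
      |∑ j ∈ Finset.range (qs k), (f (x + (j : ℝ) * α) - 1)| ≤ C k)
    (hαsum : Summable fun k => distInt ((qs k : ℝ) * α))
    (β : ℝ)
    (hβ : β = ∑' k : ℕ, ((qs k : ℝ) * α - (round ((qs k : ℝ) * α) : ℝ))) :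
    ∃ g : ℝ → ℝ,
      TendstoUniformly
        (fun N x => ∑ k ∈ Finset.range N,
          ∑ j ∈ Finset.range (qs k),
            (f (x + (∑ i ∈ Finset.range k,
                ((qs i : ℝ) * α - (round ((qs i : ℝ) * α) : ℝ))) + (j : ℝ) * α) - 1))
        g atTop ∧
      ∀ x : ℝ, f (x + β) - f x = g (x + α) - g x := by
  obtain ⟨f', hf'int, hf'repr⟩ := hAC
  -- continuity of f
  have cont_f : Continuous f := by
    have h1 : Continuous fun x : ℝ => f 0 + ∫ t in (0 : ℝ)..x, f' t :=
      continuous_const.add (intervalIntegral.continuous_primitive hf'int 0)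
    have : f = fun x : ℝ => f 0 + ∫ t in (0 : ℝ)..x, f' t := funext hf'repr
    rw [this]; exact h1
  have hper1 : Function.Periodic f 1 := hper
  have hperZ : ∀ (x : ℝ) (m : ℤ), f (x + m) = f x := by
    intro x m
    have := (hper1.int_mul m) x
    simpa using this
  set θ : ℕ → ℝ := fun k => (qs k : ℝ) * α - (round ((qs k : ℝ) * α) : ℝ) with hθ
  set b : ℕ → ℝ := fun k => ∑ i ∈ Finset.range k, θ i with hb
  set F : ℕ → ℝ → ℝ := fun k x =>
    ∑ j ∈ Finset.range (qs k), (f (x + b k + (j : ℝ) * α) - 1) with hF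
  -- summability of θ
  have hθsum : Summable θ := by
    have : (fun k => distInt ((qs k : ℝ) * α)) = fun k => |θ k| := by
      funext k; rw [distInt_eq]
    rw [this] at hαsum
    exact summable_abs_iff.mp hαsum
  -- bound on F
  have hFbound : ∀ k x, ‖F k x‖ ≤ C k := by
    intro k x
    simpa [hF] using hCbound k (x + b k)
  have hFsummable : ∀ x, Summable fun k => F k x := fun x =>
    Summable.of_norm_bounded (g := C) hCsum (fun k => hFbound k x)
  refine ⟨fun x => ∑' k, F k x, ?_, ?_⟩
  · exact tendstoUniformly_tsum_nat hCsum hFbound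
  · intro x
    -- key identity for each k
    have key : ∀ k, F k (x + α) - F k x = (f (x + b (k + 1)) - 1) - (f (x + b k) - 1) := by
      intro k
      set u : ℕ → ℝ := fun j => f (x + b k + (j : ℝ) * α) - 1 with hu
      have h1 : F k (x + α) = ∑ j ∈ Finset.range (qs k), u (j + 1) := by
        apply Finset.sum_congr rfl
        intro j _
        have : x + α + b k + (j : ℝ) * α = x + b k + ((j : ℕ) + 1 : ℝ) * α := by ring
        simp only [hu, this]
        push_cast
        ring_nf
      have h2 : F k (x + α) - F k x = u (qs k) - u 0 := by
        rw [h1, hF, ← Finset.sum_sub_distrib]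
        exact Finset.sum_range_sub u (qs k)
      rw [h2]
      have h3 : u (qs k) = f (x + b (k + 1)) - 1 := by
        have e1 : x + b k + (qs k : ℝ) * α = (x + b k + θ k) + (round ((qs k : ℝ) * α) : ℤ) := by
          simp only [hθ]; push_cast; ring
        have e2 : b (k + 1) = b k + θ k := by
          simp [hb, Finset.sum_range_succ]
        simp only [hu, e1, hperZ, e2]
        ring_nf
      have h4 : u 0 = f (x + b k) - 1 := by simp [hu]
      rw [h3, h4]
    -- the difference series
    have hsum1 := hFsummable (x + α)
    have hsum2 := hFsummable x
    have hdsum : Summable fun k => F k (x + α) - F k x := hsum1.sub hsum2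
    have hg : (∑' k, F k (x + α)) - ∑' k, F k x
        = ∑' k, (F k (x + α) - F k x) := (Summable.tsum_sub hsum1 hsum2).symm
    -- partial sums telescope
    have htel : ∀ N, ∑ k ∈ Finset.range N, (F k (x + α) - F k x)
        = (f (x + b N) - 1) - (f (x + b 0) - 1) := by
      intro N
      calc ∑ k ∈ Finset.range N, (F k (x + α) - F k x)
          = ∑ k ∈ Finset.range N,
            ((f (x + b (k + 1)) - 1) - (f (x + b k) - 1)) :=
            Finset.sum_congr rfl fun k _ => key k
        _ = (f (x + b N) - 1) - (f (x + b 0) - 1) :=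
            Finset.sum_range_sub (fun k => f (x + b k) - 1) N
    have hb0 : b 0 = 0 := by simp [hb]
    -- b N → β
    have hbβ : Tendsto b atTop (nhds β) := by
      rw [hβ]
      exact hθsum.hasSum.tendsto_sum_nat
    have hlim1 : Tendsto (fun N => ∑ k ∈ Finset.range N, (F k (x + α) - F k x))
        atTop (nhds (∑' k, (F k (x + α) - F k x))) := hdsum.hasSum.tendsto_sum_nat
    have hlim2 : Tendsto (fun N => ∑ k ∈ Finset.range N, (F k (x + α) - F k x))
        atTop (nhds (f (x + β) - f x)) := by
      have hcont : Tendsto (fun N => (f (x + b N) - 1) - (f (x + b 0) - 1))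
          atTop (nhds ((f (x + β) - 1) - (f (x + b 0) - 1))) := by
        have : Tendsto (fun N => x + b N) atTop (nhds (x + β)) :=
          tendsto_const_nhds.add hbβ
        exact (((cont_f.tendsto _).comp this).sub tendsto_const_nhds).sub tendsto_const_nhds
      have : (f (x + β) - 1) - (f (x + b 0) - 1) = f (x + β) - f x := by
        rw [hb0]; ring_nf
      rw [← this]
      simpa only [htel] using hcont
    have := tendsto_nhds_unique hlim1 hlim2
    rw [hg, this]
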